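/- If G is a simple graph on n ≥ 8 vertices with minimum degree at least 3 and degree sum at least 4n − 2 that contains K_4 on its four vertices of highest degree, and G does not contain K_{3,1,1}, then one can perform an edge interchange (remove three edges, insert three edges preserving all degrees) to obtain a graph G′ with the same degree sequence containing K_{3,1,1}. -/

import Mathlib

open SimpleGraph Finset

/-- The multiset of vertex degrees of a finite simple graph. -/
def degMS {m : ℕ} (G : SimpleGraph (Fin m)) [DecidableRel G.Adj] : Multiset ℕ :=
  (Finset.univ : Finset (Fin m)).val.map fun v => G.degree v

/-- `G` contains `K_{p,1,1}` (complete tripartite with parts `p,1,1`) as a subgraph: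
there are adjacent vertices `u, v` and `p` further vertices each adjacent to both. -/
def ContainsKp11 {V : Type*} (G : SimpleGraph V) (p : ℕ) : Prop :=
  ∃ u v : V, G.Adj u v ∧ ∃ s : Finset V, s.card = p ∧ u ∉ s ∧ v ∉ s ∧
    ∀ w ∈ s, G.Adj u w ∧ G.Adj v w

/-- The graph obtained from `G` by removing the edges in `R` and adding those in `A`. -/
def swapGraph {n : ℕ} (G : SimpleGraph (Fin n)) [DecidableRel G.Adj]
    (R A : Finset (Sym2 (Fin n))) : SimpleGraph (Fin n) where
  Adj p q := p ≠ q ∧ ((G.Adj p q ∧ s(p,q) ∉ R) ∨ s(p,q) ∈ A)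
  symm := ⟨by
    intro p q ⟨hne, h⟩
    refine ⟨hne.symm, ?_⟩
    rw [Sym2.eq_swap]
    rcases h with ⟨h1, h2⟩ | h
    · exact Or.inl ⟨h1.symm, h2⟩
    · exact Or.inr h⟩
  loopless := ⟨fun p h => h.1 rfl⟩

instance swapGraphDec {n : ℕ} (G : SimpleGraph (Fin n)) [DecidableRel G.Adj]
    (R A : Finset (Sym2 (Fin n))) : DecidableRel (swapGraph G R A).Adj :=
  fun p q => inferInstanceAs (Decidable (p ≠ q ∧ ((G.Adj p q ∧ s(p,q) ∉ R) ∨ s(p,q) ∈ A)))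

lemma swap_adj_iff {n : ℕ} (G : SimpleGraph (Fin n)) [DecidableRel G.Adj]
    (e1 e2 e3 f1 f2 f3 : Sym2 (Fin n)) (p q : Fin n) :
    (swapGraph G {e1,e2,e3} {f1,f2,f3}).Adj p q ↔
      p ≠ q ∧ ((G.Adj p q ∧ ¬(s(p,q) = e1 ∨ s(p,q) = e2 ∨ s(p,q) = e3)) ∨
        (s(p,q) = f1 ∨ s(p,q) = f2 ∨ s(p,q) = f3)) := by
  simp [swapGraph]

lemma degree_eq_of_swap {n : ℕ} (G G' : SimpleGraph (Fin n)) [DecidableRel G.Adj]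
    [DecidableRel G'.Adj] (v o u : Fin n) (ho : G.Adj v o) (hu : ¬ G.Adj v u)
    (h : ∀ q, G'.Adj v q ↔ (G.Adj v q ∧ q ≠ o) ∨ q = u) : G'.degree v = G.degree v := by
  have hN : G'.neighborFinset v = insert u ((G.neighborFinset v).erase o) := by
    ext q
    simp only [mem_neighborFinset, h q, Finset.mem_insert, Finset.mem_erase]
    tauto
  have hoN : o ∈ G.neighborFinset v := by rwa [mem_neighborFinset]
  have huN : u ∉ (G.neighborFinset v).erase o := by
    simp [mem_neighborFinset, hu]
  rw [SimpleGraph.degree, hN, Finset.card_insert_of_notMem huN,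
    Finset.card_erase_of_mem hoN, SimpleGraph.degree]
  have : 1 ≤ (G.neighborFinset v).card := Finset.card_pos.mpr ⟨o, hoN⟩
  omega

lemma degree_eq_of_same {n : ℕ} (G G' : SimpleGraph (Fin n)) [DecidableRel G.Adj]
    [DecidableRel G'.Adj] (v : Fin n)
    (h : ∀ q, G'.Adj v q ↔ G.Adj v q) : G'.degree v = G.degree v := by
  have hN : G'.neighborFinset v = G.neighborFinset v := by
    ext q; simp only [mem_neighborFinset, h q]
  rw [SimpleGraph.degree, hN, SimpleGraph.degree]

/-- The key edge-interchange lemma: given an alternating 6-cycle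
`b–x, x–y, y–z, z–t, t–w, w–b` (edges `bx, yz, wt` present, `bw, xy, zt` absent),
the corresponding interchange preserves all degrees and creates the edge `bw`. -/
lemma swap_main {n : ℕ} (G : SimpleGraph (Fin n)) [DecidableRel G.Adj]
    (b x y z w t : Fin n)
    (hbx : b ≠ x) (hby : b ≠ y) (hbz : b ≠ z) (hbw : b ≠ w) (hbt : b ≠ t)
    (hxy : x ≠ y) (hxz : x ≠ z) (hxw : x ≠ w) (hxt : x ≠ t)
    (hyz : y ≠ z) (hyw : y ≠ w) (hyt : y ≠ t)
    (hzw : z ≠ w) (hzt : z ≠ t) (hwt : w ≠ t)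
    (abx : G.Adj b x) (ayz : G.Adj y z) (awt : G.Adj w t)
    (nbw : ¬ G.Adj b w) (nxy : ¬ G.Adj x y) (nzt : ¬ G.Adj z t) :
    ∃ (G' : SimpleGraph (Fin n)) (_ : DecidableRel G'.Adj),
      ({s(b,x), s(y,z), s(w,t)} : Finset (Sym2 (Fin n))).card = 3 ∧
      ({s(b,w), s(x,y), s(z,t)} : Finset (Sym2 (Fin n))).card = 3 ∧
      ({s(b,x), s(y,z), s(w,t)} : Finset (Sym2 (Fin n))) ⊆ G.edgeFinset ∧
      Disjoint ({s(b,w), s(x,y), s(z,t)} : Finset (Sym2 (Fin n))) G.edgeFinset ∧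
      G'.edgeFinset = (G.edgeFinset \ {s(b,x), s(y,z), s(w,t)}) ∪ {s(b,w), s(x,y), s(z,t)} ∧
      (∀ v, G'.degree v = G.degree v) ∧
      G'.Adj b w ∧
      (∀ p q, G.Adj p q → s(p,q) ≠ s(b,x) → s(p,q) ≠ s(y,z) → s(p,q) ≠ s(w,t) →
        G'.Adj p q) := by
  have hxb := hbx.symm; have hyb := hby.symm; have hzb := hbz.symm
  have hwb := hbw.symm; have htb := hbt.symm
  have hyx := hxy.symm; have hzx := hxz.symm; have hwx := hxw.symm; have htx := hxt.symm
  have hzy := hyz.symm; have hwy := hyw.symm; have hty := hyt.symm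
  have hwz := hzw.symm; have htz := hzt.symm; have htw := hwt.symm
  set G' := swapGraph G {s(b,x), s(y,z), s(w,t)} {s(b,w), s(x,y), s(z,t)} with hG'
  refine ⟨G', inferInstance, ?_, ?_, ?_, ?_, ?_, ?_, ?_, ?_⟩
  · rw [Finset.card_insert_of_notMem (by simp [Sym2.eq_iff, hby, hbz, hbw, hbt]),
      Finset.card_insert_of_notMem (by simp [Sym2.eq_iff, hyw, hyt]),
      Finset.card_singleton]
  · rw [Finset.card_insert_of_notMem (by simp [Sym2.eq_iff, hbx, hby, hbz, hbt]),
      Finset.card_insert_of_notMem (by simp [Sym2.eq_iff, hxz, hxt]),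
      Finset.card_singleton]
  · intro e he
    simp only [Finset.mem_insert, Finset.mem_singleton] at he
    rcases he with rfl | rfl | rfl <;> rw [mem_edgeFinset, mem_edgeSet]
    exacts [abx, ayz, awt]
  · rw [Finset.disjoint_left]
    intro e he hE
    simp only [Finset.mem_insert, Finset.mem_singleton] at he
    rcases he with rfl | rfl | rfl <;> rw [mem_edgeFinset, mem_edgeSet] at hE
    exacts [nbw hE, nxy hE, nzt hE]
  · ext e
    induction e using Sym2.ind with
    | _ p q =>
      rw [mem_edgeFinset, mem_edgeSet, hG', swap_adj_iff]
      simp only [Finset.mem_union, Finset.mem_sdiff, mem_edgeFinset, mem_edgeSet,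
        Finset.mem_insert, Finset.mem_singleton]
      constructor
      · rintro ⟨hne, h⟩
        tauto
      · rintro (⟨hadj, hR⟩ | hA)
        · exact ⟨hadj.ne, Or.inl ⟨hadj, by tauto⟩⟩
        · refine ⟨?_, Or.inr (by tauto)⟩
          rcases hA with h | h | h <;> rw [Sym2.eq_iff] at h <;>
            rcases h with ⟨rfl, rfl⟩ | ⟨rfl, rfl⟩
          exacts [hbw, hwb, hxy, hyx, hzt, htz]
  · -- degrees
    intro v
    by_cases hvb : v = b
    · subst hvb
      refine degree_eq_of_swap G G' v x w abx nbw ?_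
      intro q
      rw [hG', swap_adj_iff]
      simp only [Sym2.eq_iff, hbx, hby, hbz, hbw, hbt, hxy, hxz, hxw, hxt, hyz, hyw, hyt,
        hzw, hzt, hwt, hxb, hyb, hzb, hwb, htb, hyx, hzx, hwx, htx, hzy, hwy, hty, hwz,
        htz, htw, false_and, and_false, or_false, false_or, true_and, and_true]
      constructor
      · exact fun h => h.2
      · rintro (⟨h1, h2⟩ | rfl)
        exacts [⟨h1.ne, Or.inl ⟨h1, h2⟩⟩, ⟨hbw, Or.inr rfl⟩]
    · by_cases hvx : v = x
      · subst hvx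
        refine degree_eq_of_swap G G' v b y abx.symm nxy ?_
        intro q
        rw [hG', swap_adj_iff]
        simp only [Sym2.eq_iff, hbx, hby, hbz, hbw, hbt, hxy, hxz, hxw, hxt, hyz, hyw, hyt,
          hzw, hzt, hwt, hxb, hyb, hzb, hwb, htb, hyx, hzx, hwx, htx, hzy, hwy, hty, hwz,
          htz, htw, false_and, and_false, or_false, false_or, true_and, and_true]
        constructor
        · exact fun h => h.2
        · rintro (⟨h1, h2⟩ | rfl)
          exacts [⟨h1.ne, Or.inl ⟨h1, h2⟩⟩, ⟨hxy, Or.inr rfl⟩]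
      · by_cases hvy : v = y
        · subst hvy
          refine degree_eq_of_swap G G' v z x ayz (fun h => nxy h.symm) ?_
          intro q
          rw [hG', swap_adj_iff]
          simp only [Sym2.eq_iff, hbx, hby, hbz, hbw, hbt, hxy, hxz, hxw, hxt, hyz, hyw, hyt,
            hzw, hzt, hwt, hxb, hyb, hzb, hwb, htb, hyx, hzx, hwx, htx, hzy, hwy, hty, hwz,
            htz, htw, false_and, and_false, or_false, false_or, true_and, and_true]
          constructor
          · exact fun h => h.2
          · rintro (⟨h1, h2⟩ | rfl)
            exacts [⟨h1.ne, Or.inl ⟨h1, h2⟩⟩, ⟨hyx, Or.inr rfl⟩]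
        · by_cases hvz : v = z
          · subst hvz
            refine degree_eq_of_swap G G' v y t ayz.symm nzt ?_
            intro q
            rw [hG', swap_adj_iff]
            simp only [Sym2.eq_iff, hbx, hby, hbz, hbw, hbt, hxy, hxz, hxw, hxt, hyz, hyw, hyt,
              hzw, hzt, hwt, hxb, hyb, hzb, hwb, htb, hyx, hzx, hwx, htx, hzy, hwy, hty, hwz,
              htz, htw, false_and, and_false, or_false, false_or, true_and, and_true]
            constructor
            · exact fun h => h.2
            · rintro (⟨h1, h2⟩ | rfl)
              exacts [⟨h1.ne, Or.inl ⟨h1, h2⟩⟩, ⟨hzt, Or.inr rfl⟩]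
          · by_cases hvw : v = w
            · subst hvw
              refine degree_eq_of_swap G G' v t b awt (fun h => nbw h.symm) ?_
              intro q
              rw [hG', swap_adj_iff]
              simp only [Sym2.eq_iff, hbx, hby, hbz, hbw, hbt, hxy, hxz, hxw, hxt, hyz, hyw,
                hyt, hzw, hzt, hwt, hxb, hyb, hzb, hwb, htb, hyx, hzx, hwx, htx, hzy, hwy,
                hty, hwz, htz, htw, false_and, and_false, or_false, false_or, true_and,
                and_true]
              constructor
              · exact fun h => h.2
              · rintro (⟨h1, h2⟩ | rfl)
                exacts [⟨h1.ne, Or.inl ⟨h1, h2⟩⟩, ⟨hwb, Or.inr rfl⟩]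
            · by_cases hvt : v = t
              · subst hvt
                refine degree_eq_of_swap G G' v w z awt.symm (fun h => nzt h.symm) ?_
                intro q
                rw [hG', swap_adj_iff]
                simp only [Sym2.eq_iff, hbx, hby, hbz, hbw, hbt, hxy, hxz, hxw, hxt, hyz, hyw,
                  hyt, hzw, hzt, hwt, hxb, hyb, hzb, hwb, htb, hyx, hzx, hwx, htx, hzy, hwy,
                  hty, hwz, htz, htw, false_and, and_false, or_false, false_or, true_and,
                  and_true]
                constructor
                · exact fun h => h.2
                · rintro (⟨h1, h2⟩ | rfl)
                  exacts [⟨h1.ne, Or.inl ⟨h1, h2⟩⟩, ⟨htz, Or.inr rfl⟩]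
              · refine degree_eq_of_same G G' v ?_
                intro q
                rw [hG', swap_adj_iff]
                simp only [Sym2.eq_iff, hvb, hvx, hvy, hvz, hvw, hvt, false_and, and_false,
                  or_false, false_or, not_false_iff, and_true]
                exact ⟨fun h => h.2, fun h => ⟨h.ne, h⟩⟩
  · exact ⟨hbw, Or.inr (by simp)⟩
  · intro p q hpq h1 h2 h3
    exact ⟨hpq.ne, Or.inl ⟨hpq, by simp [h1, h2, h3]⟩⟩

theorem stmt_18 (n : ℕ) (hn : 8 ≤ n) (G : SimpleGraph (Fin n))
    (instG : DecidableRel G.Adj)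
    (hmin : ∀ v, 3 ≤ G.degree v)
    (hsum : 4 * n - 2 ≤ ∑ v, G.degree v)
    (hK4 : ∃ s : Finset (Fin n), s.card = 4 ∧
      (∀ u ∈ s, ∀ v : Fin n, v ∉ s → G.degree v ≤ G.degree u) ∧
      ∀ u ∈ s, ∀ v ∈ s, u ≠ v → G.Adj u v)
    (hno : ¬ ContainsKp11 G 3) :
    ∃ (G' : SimpleGraph (Fin n)) (instG' : DecidableRel G'.Adj)
      (R A : Finset (Sym2 (Fin n))),
      R.card = 3 ∧ A.card = 3 ∧ R ⊆ G.edgeFinset ∧ Disjoint A G.edgeFinset ∧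
      G'.edgeFinset = (G.edgeFinset \ R) ∪ A ∧
      (∀ v, G'.degree v = G.degree v) ∧ ContainsKp11 G' 3 := by
  obtain ⟨s, hs4, htop, hclique⟩ := hK4
  -- Fact 1: no vertex outside s is adjacent to two vertices of s
  have fact1 : ∀ u ∈ s, ∀ v ∈ s, u ≠ v → ∀ p, p ∉ s → G.Adj u p → G.Adj v p → False := by
    intro u hu v hv huv p hp hup hvp
    apply hno
    refine ⟨u, v, hclique u hu v hv huv, insert p (s \ {u, v}), ?_, ?_, ?_, ?_⟩
    · rw [Finset.card_insert_of_notMem (by simp [hp]), Finset.card_sdiff_of_subset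
        (by intro e he; simp only [Finset.mem_insert, Finset.mem_singleton] at he
            rcases he with rfl | rfl; exacts [hu, hv]), hs4]
      rw [Finset.card_insert_of_notMem (by simp [huv]), Finset.card_singleton]
    · simp only [Finset.mem_insert, Finset.mem_sdiff, Finset.mem_singleton, not_or]
      exact ⟨fun h => hp (h ▸ hu), by tauto⟩
    · simp only [Finset.mem_insert, Finset.mem_sdiff, Finset.mem_singleton, not_or]
      exact ⟨fun h => hp (h ▸ hv), by tauto⟩
    · intro e he
      simp only [Finset.mem_insert, Finset.mem_sdiff, Finset.mem_singleton, not_or] at he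
      rcases he with rfl | ⟨hes, heu, hev⟩
      · exact ⟨hup, hvp⟩
      · exact ⟨hclique u hu e hes (Ne.symm heu), hclique v hv e hes (Ne.symm hev)⟩
  -- some a ∈ s with degree ≥ 4
  obtain ⟨a, has, hda⟩ : ∃ a ∈ s, 4 ≤ G.degree a := by
    by_contra h
    push_neg at h
    obtain ⟨u0, hu0⟩ : s.Nonempty := Finset.card_pos.mp (by omega)
    have hall : ∀ v ∈ (Finset.univ : Finset (Fin n)), G.degree v ≤ 3 := by
      intro v _
      by_cases hv : v ∈ s
      · have := h v hv; omega
      · have := htop u0 hu0 v hv; have := h u0 hu0; omega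
    have hle := Finset.sum_le_card_nsmul Finset.univ (fun v => G.degree v) 3 hall
    simp only [smul_eq_mul, Finset.card_univ, Fintype.card_fin] at hle
    omega
  -- some b ∈ s, b ≠ a, with degree ≥ 4
  obtain ⟨b, hbs, hbna, hdb⟩ : ∃ b ∈ s, b ≠ a ∧ 4 ≤ G.degree b := by
    by_contra h
    push_neg at h
    obtain ⟨u1, hu1s, hu1a⟩ : ∃ u1 ∈ s, u1 ≠ a :=
      Finset.exists_mem_ne (by omega) a
    have hu1d : G.degree u1 ≤ 3 := by have := h u1 hu1s hu1a; omega
    have hall : ∀ v ∈ Finset.univ.erase a, G.degree v ≤ 3 := by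
      intro v hv
      have hva : v ≠ a := (Finset.mem_erase.mp hv).1
      by_cases hvs : v ∈ s
      · have := h v hvs hva; omega
      · have := htop u1 hu1s v hvs; omega
    have hle := Finset.sum_le_card_nsmul (Finset.univ.erase a) (fun v => G.degree v) 3 hall
    have hsplit : ∑ v ∈ Finset.univ.erase a, G.degree v + G.degree a = ∑ v, G.degree v :=
      Finset.sum_erase_add Finset.univ _ (Finset.mem_univ a)
    have hcard : (Finset.univ.erase a).card = n - 1 := by
      rw [Finset.card_erase_of_mem (Finset.mem_univ a)]; simp
    have hdeg : G.degree a < n := by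
      have := G.degree_lt_card_verts a
      simpa using this
    rw [hcard, smul_eq_mul] at hle
    omega
  have hab : a ≠ b := hbna.symm
  -- the two other vertices of s
  have hsub : ({a, b} : Finset (Fin n)) ⊆ s := by
    intro e he; simp only [Finset.mem_insert, Finset.mem_singleton] at he
    rcases he with rfl | rfl; exacts [has, hbs]
  have hcd2 : (s \ {a, b}).card = 2 := by
    rw [Finset.card_sdiff_of_subset hsub, hs4,
      Finset.card_insert_of_notMem (by simp [hab]), Finset.card_singleton]
  obtain ⟨c, d, hcd, hcdE⟩ := Finset.card_eq_two.mp hcd2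
  have hcmem : c ∈ s \ {a, b} := by rw [hcdE]; simp
  have hdmem : d ∈ s \ {a, b} := by rw [hcdE]; simp
  have hcs : c ∈ s := (Finset.mem_sdiff.mp hcmem).1
  have hds : d ∈ s := (Finset.mem_sdiff.mp hdmem).1
  have hca : c ≠ a := by have := (Finset.mem_sdiff.mp hcmem).2; simp at this; tauto
  have hcb : c ≠ b := by have := (Finset.mem_sdiff.mp hcmem).2; simp at this; tauto
  have hdaa : d ≠ a := by have := (Finset.mem_sdiff.mp hdmem).2; simp at this; tauto
  have hdbb : d ≠ b := by have := (Finset.mem_sdiff.mp hdmem).2; simp at this; tauto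
  -- w : neighbor of a outside s
  obtain ⟨w, haw, hws⟩ : ∃ w, G.Adj a w ∧ w ∉ s := by
    have h1 : (G.neighborFinset a ∩ s) ⊆ s.erase a := by
      intro v hv
      rw [Finset.mem_inter, mem_neighborFinset] at hv
      exact Finset.mem_erase.mpr ⟨hv.1.ne', hv.2⟩
    have h2 : (G.neighborFinset a ∩ s).card ≤ 3 := by
      have := Finset.card_le_card h1
      rw [Finset.card_erase_of_mem has, hs4] at this
      omega
    have h3 := Finset.card_sdiff_add_card_inter (G.neighborFinset a) s
    have h4 : 4 ≤ (G.neighborFinset a).card := hda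
    have h5 : 0 < (G.neighborFinset a \ s).card := by omega
    obtain ⟨w, hw⟩ := Finset.card_pos.mp h5
    rw [Finset.mem_sdiff, mem_neighborFinset] at hw
    exact ⟨w, hw.1, hw.2⟩
  -- x : neighbor of b outside s
  obtain ⟨x, hbx, hxs⟩ : ∃ x, G.Adj b x ∧ x ∉ s := by
    have h1 : (G.neighborFinset b ∩ s) ⊆ s.erase b := by
      intro v hv
      rw [Finset.mem_inter, mem_neighborFinset] at hv
      exact Finset.mem_erase.mpr ⟨hv.1.ne', hv.2⟩
    have h2 : (G.neighborFinset b ∩ s).card ≤ 3 := by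
      have := Finset.card_le_card h1
      rw [Finset.card_erase_of_mem hbs, hs4] at this
      omega
    have h3 := Finset.card_sdiff_add_card_inter (G.neighborFinset b) s
    have h4 : 4 ≤ (G.neighborFinset b).card := hdb
    have h5 : 0 < (G.neighborFinset b \ s).card := by omega
    obtain ⟨x, hx⟩ := Finset.card_pos.mp h5
    rw [Finset.mem_sdiff, mem_neighborFinset] at hx
    exact ⟨x, hx.1, hx.2⟩
  -- basic non-adjacency facts
  have nbw : ¬ G.Adj b w := fun h => fact1 a has b hbs hab w hws haw h
  have ncw : ¬ G.Adj c w := fun h => fact1 a has c hcs hca.symm w hws haw h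
  have ndw : ¬ G.Adj d w := fun h => fact1 a has d hds hdaa.symm w hws haw h
  have nax : ¬ G.Adj a x := fun h => fact1 b hbs a has hab.symm x hxs hbx h
  have ncx : ¬ G.Adj c x := fun h => fact1 b hbs c hcs hcb.symm x hxs hbx h
  have ndx : ¬ G.Adj d x := fun h => fact1 b hbs d hds hdbb.symm x hxs hbx h
  have hxw : x ≠ w := fun h => nax (h ▸ haw)
  -- t : neighbor of w, distinct from a and x
  obtain ⟨t, hwt, hta, htx⟩ : ∃ t, G.Adj w t ∧ t ≠ a ∧ t ≠ x := by
    have h1 : (G.neighborFinset w ∩ {a, x}).card ≤ 2 := by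
      have hsub2 : (G.neighborFinset w ∩ {a, x}) ⊆ {a, x} := Finset.inter_subset_right
      have h0 := Finset.card_le_card hsub2
      have h2 : ({a, x} : Finset (Fin n)).card ≤ 2 := Finset.card_insert_le a {x}
      omega
    have h3 := Finset.card_sdiff_add_card_inter (G.neighborFinset w) {a, x}
    have h4 : 3 ≤ (G.neighborFinset w).card := hmin w
    have h5 : 0 < (G.neighborFinset w \ {a, x}).card := by omega
    obtain ⟨t, ht⟩ := Finset.card_pos.mp h5
    rw [Finset.mem_sdiff, mem_neighborFinset] at ht
    have h6 := ht.2
    simp only [Finset.mem_insert, Finset.mem_singleton, not_or] at h6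
    exact ⟨t, ht.1, h6.1, h6.2⟩
  have hts : t ∉ s := by
    intro h
    exact fact1 a has t h (Ne.symm hta) w hws haw hwt.symm
  -- choose (y,z) among {c,d} so that z is NOT adjacent to t
  have hyzch : ∃ y z : Fin n, y ∈ s ∧ z ∈ s ∧ y ≠ z ∧ y ≠ a ∧ y ≠ b ∧ z ≠ a ∧ z ≠ b ∧
      ¬ G.Adj z t ∧ ¬ G.Adj x y := by
    by_cases hdt : G.Adj d t
    · refine ⟨d, c, hds, hcs, hcd.symm, hdaa, hdbb, hca, hcb, ?_, fun h => ndx h.symm⟩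
      intro hct
      exact fact1 c hcs d hds hcd t hts hct hdt
    · exact ⟨c, d, hcs, hds, hcd, hca, hcb, hdaa, hdbb, hdt, fun h => ncx h.symm⟩
  obtain ⟨y, z, hys, hzs, hyzne, hya, hyb, hza, hzb, nztadj, nxyadj⟩ := hyzch
  -- remaining disequalities
  have hyw : y ≠ w := fun h => hws (h ▸ hys)
  have hzw : z ≠ w := fun h => hws (h ▸ hzs)
  have hyt : y ≠ t := fun h => hts (h ▸ hys)
  have hzt : z ≠ t := fun h => hts (h ▸ hzs)
  have hbw : b ≠ w := fun h => hws (h ▸ hbs)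
  have hbt : b ≠ t := fun h => hts (h ▸ hbs)
  have hxy : x ≠ y := fun h => hxs (h ▸ hys)
  have hxz : x ≠ z := fun h => hxs (h ▸ hzs)
  have hax : a ≠ x := fun h => hxs (h ▸ has)
  have hat : a ≠ t := Ne.symm hta
  have haw2 : a ≠ w := haw.ne
  -- apply the swap lemma
  obtain ⟨G', instG', h1, h2, h3, h4, h5, h6, h7, h8⟩ :=
    swap_main G b x y z w t hbx.ne (Ne.symm hyb) (Ne.symm hzb) hbw hbt hxy hxz hxw
      (Ne.symm htx) hyzne hyw hyt hzw hzt hwt.ne hbx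
      (hclique y hys z hzs hyzne) hwt nbw nxyadj nztadj
  refine ⟨G', instG', {s(b,x), s(y,z), s(w,t)}, {s(b,w), s(x,y), s(z,t)},
    h1, h2, h3, h4, h5, h6, ?_⟩
  -- K_{3,1,1} in G' : edge a b with common neighbors y, z, w
  have hayadj : G.Adj a y := hclique a has y hys (Ne.symm hya)
  have hazadj : G.Adj a z := hclique a has z hzs (Ne.symm hza)
  have hbyadj : G.Adj b y := hclique b hbs y hys (Ne.symm hyb)
  have hbzadj : G.Adj b z := hclique b hbs z hzs (Ne.symm hzb)
  have habadj : G.Adj a b := hclique a has b hbs hab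
  have pa : ∀ q, G.Adj a q → G'.Adj a q := fun q hq =>
    h8 a q hq (by simp [Sym2.eq_iff, hab, hax])
      (by simp [Sym2.eq_iff, Ne.symm hya, Ne.symm hza])
      (by simp [Sym2.eq_iff, haw2, hat])
  refine ⟨a, b, pa b habadj, {y, z, w}, ?_, ?_, ?_, ?_⟩
  · rw [Finset.card_insert_of_notMem (by simp [hyzne, hyw]),
      Finset.card_insert_of_notMem (by simp [hzw]), Finset.card_singleton]
  · simp only [Finset.mem_insert, Finset.mem_singleton, not_or]
    exact ⟨Ne.symm hya, Ne.symm hza, haw2⟩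
  · simp only [Finset.mem_insert, Finset.mem_singleton, not_or]
    exact ⟨Ne.symm hyb, Ne.symm hzb, hbw⟩
  · intro v hv
    simp only [Finset.mem_insert, Finset.mem_singleton] at hv
    rcases hv with rfl | rfl | rfl
    · exact ⟨pa v hayadj,
        h8 b v hbyadj (by simp [Sym2.eq_iff, Ne.symm hxy, hbx.ne])
          (by simp [Sym2.eq_iff, Ne.symm hyb, Ne.symm hzb])
          (by simp [Sym2.eq_iff, hbw, hbt])⟩
    · exact ⟨pa v hazadj,
        h8 b v hbzadj (by simp [Sym2.eq_iff, Ne.symm hxz, hbx.ne])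
          (by simp [Sym2.eq_iff, Ne.symm hyb, Ne.symm hzb])
          (by simp [Sym2.eq_iff, hbw, hbt])⟩
    · exact ⟨pa v haw, h7⟩
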